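/- For every column c of P^{⊗2}, the set of 6 rows in which column c has a negative entry, viewed as a 6-element set of indices in {0,1,2,3}², coincides with one of the 16 sets S₀,…,S₁₅ listed in Theorem 3 of the paper; in particular, the union over all columns of these negative-row index sets consists of exactly 16 distinct 6-element subsets of {0,1,2,3}². -/
import Mathlib


open Matrix Finset

noncomputable def P : Matrix (Fin 4) (Fin 4) ℝ :=
  (1/2 : ℝ) • !![1, 1, -1, 1; 1, 1, 1, -1; -1, 1, 1, 1; 1, -1, 1, 1]

/-- The Kronecker square `P^{⊗2}`, indexed by pairs in `{0,1,2,3}²`. -/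
noncomputable def P2 : Matrix (Fin 4 × Fin 4) (Fin 4 × Fin 4) ℝ :=
  fun i j => P i.1 j.1 * P i.2 j.2

/-- The set of rows in which column `c` of `P^{⊗2}` has a negative entry. -/
noncomputable def negRows (c : Fin 4 × Fin 4) : Finset (Fin 4 × Fin 4) :=
  univ.filter (fun r => P2 r c < 0)

/-- The 16 six-element subsets `S₀,…,S₁₅` of `{0,1,2,3}²` from Theorem 3. -/
def S : Fin 16 → Finset (Fin 4 × Fin 4) :=
  ![{(0,2),(1,2),(2,0),(2,1),(2,3),(3,2)},
    {(0,3),(1,3),(2,0),(2,1),(2,2),(3,3)},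
    {(0,0),(1,0),(2,1),(2,2),(2,3),(3,0)},
    {(0,1),(1,1),(2,0),(2,2),(2,3),(3,1)},
    {(0,2),(1,2),(2,2),(3,0),(3,1),(3,3)},
    {(0,3),(1,3),(2,3),(3,0),(3,1),(3,2)},
    {(0,0),(1,0),(2,0),(3,1),(3,2),(3,3)},
    {(0,1),(1,1),(2,1),(3,0),(3,2),(3,3)},
    {(0,0),(0,1),(0,3),(1,2),(2,2),(3,2)},
    {(0,0),(0,1),(0,2),(1,3),(2,3),(3,3)},
    {(0,1),(0,2),(0,3),(1,0),(2,0),(3,0)},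
    {(0,0),(0,2),(0,3),(1,1),(2,1),(3,1)},
    {(0,2),(1,0),(1,1),(1,3),(2,2),(3,2)},
    {(0,3),(1,0),(1,1),(1,2),(2,3),(3,3)},
    {(0,0),(1,1),(1,2),(1,3),(2,0),(3,0)},
    {(0,1),(1,0),(1,2),(1,3),(2,1),(3,1)}]


def Pz : Matrix (Fin 4) (Fin 4) ℤ :=
  !![1, 1, -1, 1; 1, 1, 1, -1; -1, 1, 1, 1; 1, -1, 1, 1]

lemma P_eq (i j : Fin 4) : P i j = ((Pz i j : ℤ) : ℝ) / 2 := by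
  fin_cases i <;> fin_cases j <;> norm_num [P, Pz]

def negRowsZ (c : Fin 4 × Fin 4) : Finset (Fin 4 × Fin 4) :=
  univ.filter (fun r => Pz r.1 c.1 * Pz r.2 c.2 < 0)

lemma negRows_eq (c : Fin 4 × Fin 4) : negRows c = negRowsZ c := by
  ext r
  simp only [negRows, negRowsZ, mem_filter, mem_univ, true_and, P2,
    P_eq, div_mul_div_comm]
  rw [div_neg_iff]
  constructor
  · rintro (⟨-, h4⟩ | ⟨h, -⟩)
    · norm_num at h4
    · exact_mod_cast h
  · intro h
    exact Or.inr ⟨by exact_mod_cast h, by norm_num⟩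

/-- The negative-row set of every column of `P^{⊗2}` is one of the 16 sets
`S₀,…,S₁₅`, and exactly 16 distinct 6-element subsets arise this way. -/
theorem negRows_eq_S :
    (∀ c : Fin 4 × Fin 4, ∃ i : Fin 16, negRows c = S i) ∧
    (univ.image negRows = univ.image S) ∧
    (univ.image negRows).card = 16 ∧
    (∀ i : Fin 16, (S i).card = 6) := by
  have h : negRows = negRowsZ := funext negRows_eq
  rw [h]
  refine ⟨?_, ?_, ?_, ?_⟩ <;> decide
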